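/- Let φ = (1+√5)/2, let 2 < β < 2φ, and let T : ℝ → ℝ be defined by T(x) = x + 2 if x ≤ 0 and T(x) = β − φ·x if x > 0. Then there exists a T-invariant Borel probability measure μ on ℝ, absolutely continuous with respect to Lebesgue measure, such that the Lyapunov exponent of T with respect to μ satisfies ∫ log |deriv T(x)| dμ(x) = (2(3−φ)/(βφ − 2(β + φ − 4)))·log φ. -/

import Mathlib

open MeasureTheory

set_option maxHeartbeats 1000000

theorem lyapunov_before_plateau_s_phi (φ β : ℝ) (hφ : φ = (1 + Real.sqrt 5) / 2)
    (hβ₁ : 2 < β) (hβ₂ : β < 2 * φ)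
    (T : ℝ → ℝ) (hT : T = fun x => if x ≤ 0 then x + 2 else β - φ * x) :
    ∃ μ : Measure ℝ, IsProbabilityMeasure μ ∧ μ.map T = μ ∧ μ ≪ volume ∧
      ∫ x, Real.log |deriv T x| ∂μ
        = (2 * (3 - φ) / (β * φ - 2 * (β + φ - 4))) * Real.log φ := by
  -- basic facts about φ
  have hsq : Real.sqrt 5 ^ 2 = 5 := Real.sq_sqrt (by norm_num)
  have hs0 : (0:ℝ) ≤ Real.sqrt 5 := Real.sqrt_nonneg 5
  have hφ1 : 1 < φ := by rw [hφ]; nlinarith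
  have hφ2 : φ < 2 := by rw [hφ]; nlinarith
  have hφq : φ ^ 2 = φ + 1 := by rw [hφ]; nlinarith
  have hφ0 : (0:ℝ) < φ := by linarith
  have hinv : φ⁻¹ = φ - 1 := by
    rw [inv_eq_one_div, eq_comm, eq_div_iff (ne_of_gt hφ0)]
    nlinarith
  -- the denominator
  set Dn : ℝ := β * φ - 2 * (β + φ - 4) with hDndef
  have hDn : 0 < Dn := by
    have h1 : (0:ℝ) < (2 * φ - β) * (2 - φ) := by
      apply mul_pos <;> linarith
    nlinarith
  set b : ℝ := Dn⁻¹ with hbdef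
  have hb0 : 0 < b := inv_pos.mpr hDn
  have hbDn : b * Dn = 1 := inv_mul_cancel₀ (ne_of_gt hDn)
  -- interval endpoints
  set l : ℝ := β - β * φ with hldef
  set m : ℝ := β - 2 * φ with hmdef
  set r : ℝ := β - 2 * φ + 2 with hrdef
  set q : ℝ := β - β * φ + 2 with hqdef
  have hlm : l < m := by
    have : 2 * φ < β * φ := by nlinarith
    simp only [hldef, hmdef]; linarith
  have hm0 : m < 0 := by simp only [hmdef]; linarith
  have h0q : 0 < q := by simp only [hqdef]; nlinarith
  have hqr : q < r := by simp only [hqdef, hrdef]; nlinarith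
  have h0r : 0 < r := by linarith
  have hr2 : r < 2 := by simp only [hrdef]; linarith
  have hmq : m < q := by linarith
  -- coefficients
  set ca : ENNReal := ENNReal.ofReal (b * (φ - 1) * (φ - 1)) with hcadef
  set cb : ENNReal := ENNReal.ofReal b with hcbdef
  set cc : ENNReal := ENNReal.ofReal (b * φ) with hccdef
  set cd : ENNReal := ENNReal.ofReal (b * (φ - 1)) with hcddef
  set F : ENNReal := ENNReal.ofReal (φ - 1) with hFdef
  -- the invariant measure
  set μ : Measure ℝ := ca • volume.restrict (Set.Ioc l m) + cb • volume.restrict (Set.Ioc m r)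
      + cc • volume.restrict (Set.Ioc r 2) + cd • volume.restrict (Set.Ioc 2 β) with hμdef
  -- coefficient identities
  have hφ1' : (0:ℝ) ≤ φ - 1 := by linarith
  have i1 : ca + cb * F = cb := by
    rw [hcadef, hcbdef, hFdef, ← ENNReal.ofReal_mul hb0.le, ← ENNReal.ofReal_add (by nlinarith) (by nlinarith)]
    congr 1; nlinarith
  have i2 : cb + cb * F = cc := by
    rw [hcbdef, hccdef, hFdef, ← ENNReal.ofReal_mul hb0.le, ← ENNReal.ofReal_add hb0.le (by nlinarith)]
    congr 1; nlinarith
  have i3 : cb * F = cd := by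
    rw [hcbdef, hcddef, hFdef, ← ENNReal.ofReal_mul hb0.le]
  have i4 : cc * F = cb := by
    rw [hccdef, hcbdef, hFdef, ← ENNReal.ofReal_mul (by nlinarith)]
    congr 1; nlinarith
  have i5 : cd * F = ca := by
    rw [hcddef, hcadef, hFdef, ← ENNReal.ofReal_mul (by nlinarith)]
  -- measurability of T
  have hTm : Measurable T := by
    rw [hT]
    exact Measurable.ite measurableSet_Iic (measurable_id.add_const 2)
      (measurable_const.sub (measurable_const.mul measurable_id))
  -- the negative branch
  have negbranch : ∀ (s : Set ℝ) (u v : ℝ), v ≤ 0 →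
      volume (T ⁻¹' s ∩ Set.Ioc u v) = volume (s ∩ Set.Ioc (u + 2) (v + 2)) := by
    intro s u v hv
    have hset : T ⁻¹' s ∩ Set.Ioc u v = (fun x => x + 2) ⁻¹' (s ∩ Set.Ioc (u + 2) (v + 2)) := by
      ext x
      simp only [Set.mem_inter_iff, Set.mem_preimage, Set.mem_Ioc, hT]
      constructor
      · rintro ⟨hxs, hu, hxv⟩
        rw [if_pos (hxv.trans hv)] at hxs
        exact ⟨hxs, by linarith, by linarith⟩
      · rintro ⟨hxs, hu, hxv⟩
        have hx0 : x ≤ 0 := by linarith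
        exact ⟨by rw [if_pos hx0]; exact hxs, by linarith, by linarith⟩
    rw [hset, measure_preimage_add_right]
  -- the positive branch
  have posbranch : ∀ (s : Set ℝ) (u v : ℝ), 0 ≤ u → u ≤ v →
      volume (T ⁻¹' s ∩ Set.Ioc u v)
        = F * volume (s ∩ Set.Ioc (β - φ * v) (β - φ * u)) := by
    intro s u v hu huv
    have hset : T ⁻¹' s ∩ Set.Ioc u v
        = ((-φ) * ·) ⁻¹' ((fun y => β + y) ⁻¹' (s ∩ Set.Ico (β - φ * v) (β - φ * u))) := by
      ext x
      simp only [Set.mem_inter_iff, Set.mem_preimage, Set.mem_Ioc, Set.mem_Ico, hT]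
      have hrw : β + -φ * x = β - φ * x := by ring
      rw [hrw]
      constructor
      · rintro ⟨hxs, hux, hxv⟩
        have hx0 : ¬ x ≤ 0 := by push_neg; linarith
        rw [if_neg hx0] at hxs
        exact ⟨hxs, by nlinarith, by nlinarith⟩
      · rintro ⟨hxs, h1, h2⟩
        have hux : u < x := by nlinarith
        have hx0 : ¬ x ≤ 0 := by push_neg; linarith
        refine ⟨by rw [if_neg hx0]; exact hxs, hux, by nlinarith⟩
    rw [hset, Real.volume_preimage_mul_left (by simpa using ne_of_gt hφ0 : (-φ) ≠ 0)]
    rw [measure_preimage_add]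
    have habs : |(-φ)⁻¹| = φ - 1 := by
      rw [abs_inv, abs_neg, abs_of_pos hφ0, hinv]
    rw [habs, ← hFdef]
    congr 1
    exact measure_congr (Filter.EventuallyEq.inter (Filter.EventuallyEq.rfl) Ico_ae_eq_Ioc)
  -- splitting lemma
  have vsplit : ∀ (t : Set ℝ), MeasurableSet t → ∀ u v w : ℝ, u ≤ v → v ≤ w →
      volume (t ∩ Set.Ioc u w) = volume (t ∩ Set.Ioc u v) + volume (t ∩ Set.Ioc v w) := by
    intro t ht u v w huv hvw
    rw [← Set.Ioc_union_Ioc_eq_Ioc huv hvw, Set.inter_union_distrib_left]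
    exact measure_union ((Set.Ioc_disjoint_Ioc_of_le le_rfl).mono Set.inter_subset_right
      Set.inter_subset_right) (ht.inter measurableSet_Ioc)
  -- absolute continuity
  have hac : μ ≪ volume := by
    rw [hμdef]
    refine Measure.AbsolutelyContinuous.add_left (Measure.AbsolutelyContinuous.add_left
      (Measure.AbsolutelyContinuous.add_left ?_ ?_) ?_) ?_ <;>
      exact (Measure.absolutelyContinuous_of_le Measure.restrict_le_self).smul_left _
  -- probability measure
  have hprob : IsProbabilityMeasure μ := by
    constructor
    rw [hμdef]
    simp only [Measure.coe_add, Pi.add_apply, Measure.smul_apply,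
      Measure.restrict_apply MeasurableSet.univ, Set.univ_inter, Real.volume_Ioc, smul_eq_mul]
    have e1 : ca * ENNReal.ofReal (m - l) = ENNReal.ofReal (b * (φ-1) * (φ-1) * (m - l)) := by
      rw [hcadef, ← ENNReal.ofReal_mul (by nlinarith)]
    have e2 : cb * ENNReal.ofReal (r - m) = ENNReal.ofReal (b * (r - m)) := by
      rw [hcbdef, ← ENNReal.ofReal_mul hb0.le]
    have e3 : cc * ENNReal.ofReal (2 - r) = ENNReal.ofReal (b * φ * (2 - r)) := by
      rw [hccdef, ← ENNReal.ofReal_mul (by nlinarith)]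
    have e4 : cd * ENNReal.ofReal (β - 2) = ENNReal.ofReal (b * (φ-1) * (β - 2)) := by
      rw [hcddef, ← ENNReal.ofReal_mul (by nlinarith)]
    have n1 : (0:ℝ) ≤ b * (φ-1) * (φ-1) * (m - l) :=
      mul_nonneg (mul_nonneg (mul_nonneg hb0.le hφ1') hφ1') (by linarith)
    have n2 : (0:ℝ) ≤ b * (r - m) := mul_nonneg hb0.le (by linarith)
    have n3 : (0:ℝ) ≤ b * φ * (2 - r) := mul_nonneg (mul_nonneg hb0.le hφ0.le) (by linarith)
    have n4 : (0:ℝ) ≤ b * (φ-1) * (β - 2) := mul_nonneg (mul_nonneg hb0.le hφ1') (by linarith)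
    rw [e1, e2, e3, e4, ← ENNReal.ofReal_add n1 n2,
      ← ENNReal.ofReal_add (add_nonneg n1 n2) n3,
      ← ENNReal.ofReal_add (add_nonneg (add_nonneg n1 n2) n3) n4]
    rw [show b * (φ-1) * (φ-1) * (m - l) + b * (r - m) + b * φ * (2 - r) + b * (φ-1) * (β - 2)
        = 1 from by
      simp only [hmdef, hldef, hrdef]
      linear_combination hbDn + (b * (β * φ - β - 2 * φ + 4)) * hφq]
    exact ENNReal.ofReal_one
  -- invariance
  have hmap : μ.map T = μ := by
    refine Measure.ext fun s hs => ?_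
    rw [Measure.map_apply hTm hs]
    have hTs : MeasurableSet (T ⁻¹' s) := hTm hs
    rw [hμdef]
    simp only [Measure.coe_add, Pi.add_apply, Measure.smul_apply,
      Measure.restrict_apply hTs, Measure.restrict_apply hs, smul_eq_mul]
    rw [vsplit _ hTs m 0 r hm0.le h0r.le]
    rw [negbranch s l m hm0.le, negbranch s m 0 le_rfl,
      posbranch s 0 r le_rfl h0r.le, posbranch s r 2 h0r.le hr2.le,
      posbranch s 2 β (by norm_num) hβ₁.le]
    rw [show l + 2 = q from by simp only [hldef, hqdef],
      show m + 2 = r from by simp only [hmdef, hrdef],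
      show (0:ℝ) + 2 = 2 from by norm_num,
      show β - φ * r = q from by simp only [hrdef, hqdef]; linear_combination (2:ℝ) * hφq,
      show β - φ * 0 = β from by ring,
      show β - φ * 2 = m from by simp only [hmdef]; ring,
      show β - φ * β = l from by simp only [hldef]; ring]
    rw [vsplit s hs q 2 β (by linarith) hβ₁.le, vsplit s hs q r 2 hqr.le hr2.le,
      vsplit s hs m q r hmq.le hqr.le]
    trans ((ca + cb * F) * volume (s ∩ Set.Ioc q r) + (cb + cb * F) * volume (s ∩ Set.Ioc r 2)
      + (cb * F) * volume (s ∩ Set.Ioc 2 β) + (cc * F) * volume (s ∩ Set.Ioc m q)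
      + (cd * F) * volume (s ∩ Set.Ioc l m))
    · ring
    · rw [i1, i2, i3, i4, i5]; ring
  refine ⟨μ, hprob, hmap, hac, ?_⟩
  -- the Lyapunov exponent
  have hderiv : ∀ x : ℝ, x ≠ 0 →
      Real.log |deriv T x| = Set.indicator (Set.Ioi 0) (fun _ => Real.log φ) x := by
    intro x hx
    rcases lt_or_gt_of_ne hx with hneg | hpos
    · have hev : T =ᶠ[nhds x] fun y => y + 2 := by
        filter_upwards [Iio_mem_nhds hneg] with y hy
        rw [hT]; exact if_pos (le_of_lt hy)
      have hD : HasDerivAt (fun y : ℝ => y + 2) 1 x := by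
        simpa using (hasDerivAt_id x).add_const 2
      rw [hev.deriv_eq, hD.deriv, Set.indicator_of_notMem (by simpa using hneg.le)]
      simp
    · have hev : T =ᶠ[nhds x] fun y => β - φ * y := by
        filter_upwards [Ioi_mem_nhds hpos] with y hy
        rw [hT]; exact if_neg (not_le.mpr hy)
      have hD : HasDerivAt (fun y : ℝ => β - φ * y) (-φ) x := by
        simpa using ((hasDerivAt_id x).const_mul φ).const_sub β
      rw [hev.deriv_eq, hD.deriv, Set.indicator_of_mem (Set.mem_Ioi.mpr hpos)]
      rw [abs_neg, abs_of_pos hφ0]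
  have h0 : μ {(0:ℝ)} = 0 := hac Real.volume_singleton
  have hne : ∀ᵐ x ∂μ, x ≠ (0:ℝ) := by
    refine ae_iff.mpr ?_
    simp only [ne_eq, not_not]
    rw [Set.setOf_eq_eq_singleton]
    exact h0
  have hae : (fun x => Real.log |deriv T x|)
      =ᵐ[μ] Set.indicator (Set.Ioi 0) (fun _ => Real.log φ) := by
    filter_upwards [hne] with x hx using hderiv x hx
  rw [integral_congr_ae hae, integral_indicator_const _ measurableSet_Ioi]
  have hμIoi : μ (Set.Ioi 0) = ENNReal.ofReal (2 * (3 - φ) / Dn) := by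
    rw [hμdef]
    simp only [Measure.coe_add, Pi.add_apply, Measure.smul_apply,
      Measure.restrict_apply measurableSet_Ioi, smul_eq_mul]
    have j1 : Set.Ioi (0:ℝ) ∩ Set.Ioc l m = ∅ := by
      refine Set.eq_empty_iff_forall_notMem.mpr fun x hx => ?_
      simp only [Set.mem_inter_iff, Set.mem_Ioi, Set.mem_Ioc] at hx
      linarith [hx.1, hx.2.2]
    have j2 : Set.Ioi (0:ℝ) ∩ Set.Ioc m r = Set.Ioc 0 r := by
      ext x
      simp only [Set.mem_inter_iff, Set.mem_Ioi, Set.mem_Ioc]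
      constructor
      · rintro ⟨h1, h2, h3⟩; exact ⟨h1, h3⟩
      · rintro ⟨h1, h2⟩; exact ⟨h1, by linarith, h2⟩
    have j3 : Set.Ioi (0:ℝ) ∩ Set.Ioc r 2 = Set.Ioc r 2 :=
      Set.inter_eq_right.mpr fun x hx => Set.mem_Ioi.mpr (h0r.trans (Set.mem_Ioc.mp hx).1)
    have j4 : Set.Ioi (0:ℝ) ∩ Set.Ioc 2 β = Set.Ioc 2 β :=
      Set.inter_eq_right.mpr fun x hx =>
        Set.mem_Ioi.mpr (lt_trans (by norm_num) (Set.mem_Ioc.mp hx).1)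
    rw [j1, j2, j3, j4]
    simp only [measure_empty, mul_zero, zero_add, Real.volume_Ioc]
    have e2 : cb * ENNReal.ofReal (r - 0) = ENNReal.ofReal (b * r) := by
      rw [hcbdef, ← ENNReal.ofReal_mul hb0.le, sub_zero]
    have e3 : cc * ENNReal.ofReal (2 - r) = ENNReal.ofReal (b * φ * (2 - r)) := by
      rw [hccdef, ← ENNReal.ofReal_mul (by nlinarith)]
    have e4 : cd * ENNReal.ofReal (β - 2) = ENNReal.ofReal (b * (φ-1) * (β - 2)) := by
      rw [hcddef, ← ENNReal.ofReal_mul (by nlinarith)]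
    have n2 : (0:ℝ) ≤ b * r := mul_nonneg hb0.le h0r.le
    have n3 : (0:ℝ) ≤ b * φ * (2 - r) := mul_nonneg (mul_nonneg hb0.le hφ0.le) (by linarith)
    have n4 : (0:ℝ) ≤ b * (φ-1) * (β - 2) := mul_nonneg (mul_nonneg hb0.le hφ1') (by linarith)
    rw [e2, e3, e4, ← ENNReal.ofReal_add n2 n3, ← ENNReal.ofReal_add (add_nonneg n2 n3) n4]
    congr 1
    have hr' : r + φ * (2 - r) + (φ-1) * (β - 2) = 2 * (3 - φ) := by
      simp only [hrdef]; linear_combination 2 * hφq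
    calc b * r + b * φ * (2 - r) + b * (φ-1) * (β - 2)
        = b * (r + φ * (2 - r) + (φ-1) * (β - 2)) := by ring
      _ = b * (2 * (3 - φ)) := by rw [hr']
      _ = 2 * (3 - φ) / Dn := by rw [hbdef]; field_simp
  rw [measureReal_def, hμIoi, ENNReal.toReal_ofReal (div_nonneg (by linarith) hDn.le)]
  rw [smul_eq_mul]
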